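/- Let m ≥ 0, let B > 0 be a real number, let λ_1,…,λ_m ≥ 0 be nonnegative real numbers with Σ_{k=1}^m λ_k ≤ B, let x be a complex number with |x| > 2√B, and let z_1,…,z_m be complex numbers with |z_k| > √B for every k. Then | x + Σ_{k=1}^m λ_k / z_k | > √B. -/

import Mathlib

/-- Disk invariance of the branched continued-fraction maps: if `B > 0`,
`λ_k ≥ 0` with `Σ_k λ_k ≤ B`, `|x| > 2√B`, and `|z_k| > √B` for all `k`,
then `|x + Σ_k λ_k / z_k| > √B`. -/
theorem disk_invariance (m : ℕ) (B : ℝ) (hB : 0 < B)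
    (lam : Fin m → ℝ) (hlam : ∀ k, 0 ≤ lam k) (hsum : ∑ k, lam k ≤ B)
    (x : ℂ) (hx : 2 * Real.sqrt B < ‖x‖)
    (z : Fin m → ℂ) (hz : ∀ k, Real.sqrt B < ‖z k‖) :
    Real.sqrt B < ‖x + ∑ k, (lam k : ℂ) / z k‖ := by
  have hsB : 0 < Real.sqrt B := Real.sqrt_pos.mpr hB
  have hS : ‖∑ k, (lam k : ℂ) / z k‖ ≤ Real.sqrt B := by
    calc ‖∑ k, (lam k : ℂ) / z k‖
        ≤ ∑ k, ‖(lam k : ℂ) / z k‖ :=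
          norm_sum_le _ _
      _ ≤ ∑ k, lam k / Real.sqrt B := by
          apply Finset.sum_le_sum
          intro k _
          rw [norm_div, Complex.norm_real, Real.norm_of_nonneg (hlam k)]
          exact div_le_div_of_nonneg_left (hlam k) hsB (hz k).le
      _ = (∑ k, lam k) / Real.sqrt B := by rw [Finset.sum_div]
      _ ≤ B / Real.sqrt B := div_le_div_of_nonneg_right hsum hsB.le
      _ = Real.sqrt B := Real.div_sqrt
  have h2 := norm_add_le (x + ∑ k, (lam k : ℂ) / z k) (-(∑ k, (lam k : ℂ) / z k))
  simp only [add_neg_cancel_right, norm_neg] at h2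
  linarith
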